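/- Let d ≥ 1, let p be an admissible triple of exponents, and let η ∈ (0,1). Then for every ε > 0 there exists δ > 0 such that for all f1 ∈ L^{p_1}(ℝ^{2d+1}), f2 ∈ L^{p_2}(ℝ^{2d+1}) with ‖f1‖_{p_1} ≤ δ and ‖f2‖_{p_2} ≤ δ, every 2d×2d real matrix A and every b ∈ ℝ with ‖AᵀJA‖ ≤ δ and |b|·‖AᵀJA‖ ≤ δ, one has |T''(f_{1,♯}, f_{2,♯}, g3)| ≤ ε (‖f1‖_{p_1}² + ‖f2‖_{p_2}² + (1+b²)‖AᵀJA‖²), where f_{j,♯} is formed with parameter η. -/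

import Mathlib

open MeasureTheory Filter Matrix
open scoped Real ENNReal BigOperators InnerProductSpace

noncomputable section

namespace Stability

/-- Euclidean space `ℝ^n`. -/
abbrev E (n : ℕ) : Type := EuclideanSpace ℝ (Fin n)

/-- The underlying space `ℝ^{2d} × ℝ` of the Heisenberg group `ℍ^d`. -/
abbrev H (d : ℕ) : Type := E (2 * d) × ℝ

/-- A triple of exponents `p ∈ (1,∞)^3` is admissible if `∑ 1/p_j = 2`. -/
def IsAdmissible (p : Fin 3 → ℝ) : Prop :=
  (∀ j, 1 < p j) ∧ (∑ j, (p j)⁻¹) = 2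

/-- Conjugate exponent `p' = p/(p-1)`. -/
def conjExp (q : ℝ) : ℝ := q / (q - 1)

/-- The sharp Young constant `A_p`. -/
def youngA (p : Fin 3 → ℝ) : ℝ :=
  ∏ j, (p j) ^ (1 / (2 * p j)) / (conjExp (p j)) ^ (1 / (2 * conjExp (p j)))

/-- `γ_j = π p_j'`. -/
def γexp (p : Fin 3 → ℝ) (j : Fin 3) : ℝ := Real.pi * conjExp (p j)

/-- The `L^q` norm (for a real exponent `q`) of a complex-valued function. -/
def Lnorm {α : Type*} [MeasureSpace α] (q : ℝ) (f : α → ℂ) : ℝ :=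
  (∫ z, ‖f z‖ ^ q) ^ (1 / q)

/-- Membership of a triple of functions in `L^p = L^{p_1} × L^{p_2} × L^{p_3}`. -/
def MemLpT {α : Type*} [MeasureSpace α] (p : Fin 3 → ℝ) (f : Fin 3 → α → ℂ) : Prop :=
  ∀ j, MemLp (f j) (ENNReal.ofReal (p j)) volume

/-- Maximum of a triple of reals. -/
def tmax (u : Fin 3 → ℝ) : ℝ := max (u 0) (max (u 1) (u 2))

/-- `‖f‖_p := max_j ‖f_j‖_{p_j}` for a triple of functions. -/
def tnorm {α : Type*} [MeasureSpace α] (p : Fin 3 → ℝ) (f : Fin 3 → α → ℂ) : ℝ :=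
  tmax fun j => Lnorm (p j) (f j)

/-- The real Gaussian `exp(-γ_j |z|²)` on `ℝ^n`. -/
def gaussER (n : ℕ) (p : Fin 3 → ℝ) (j : Fin 3) : E n → ℝ :=
  fun z => Real.exp (-(γexp p j * ‖z‖ ^ 2))

/-- The Gaussian `g_j(z) = exp(-γ_j |z|²)` on `ℝ^n`, as a complex-valued function. -/
def gaussE (n : ℕ) (p : Fin 3 → ℝ) (j : Fin 3) : E n → ℂ :=
  fun z => Complex.ofReal (gaussER n p j z)

/-- The trilinear form for convolution on `ℝ^n`. -/
def Tconv (n : ℕ) (f : Fin 3 → E n → ℂ) : ℂ :=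
  ∫ x : E n, ∫ y : E n, f 0 x * f 1 y * f 2 (-x - y)

/-- Action of a matrix on `ℝ^n`. -/
def mapp {n : ℕ} (M : Matrix (Fin n) (Fin n) ℝ) (x : E n) : E n :=
  Matrix.toEuclideanLin M x

/-- The (Euclidean) operator norm of a matrix. -/
def opNorm {n : ℕ} (M : Matrix (Fin n) (Fin n) ℝ) : ℝ :=
  ‖LinearMap.toContinuousLinearMap (Matrix.toEuclideanLin M)‖

/-- The standard symplectic form `σ(x,y) = ∑_{j<d} (x_j y_{j+d} - x_{j+d} y_j)` on `ℝ^{2d}`. -/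
def symp (d : ℕ) (x y : E (2 * d)) : ℝ :=
  ∑ j : Fin d, (x ⟨j.1, by have := j.2; omega⟩ * y ⟨j.1 + d, by have := j.2; omega⟩
    - x ⟨j.1 + d, by have := j.2; omega⟩ * y ⟨j.1, by have := j.2; omega⟩)

/-- The matrix `J` with `σ(x,y) = x ⬝ (J y)`. -/
def Jmat (d : ℕ) : Matrix (Fin (2 * d)) (Fin (2 * d)) ℝ :=
  Matrix.of fun i k =>
    if i.1 < d ∧ k.1 = i.1 + d then 1 else if k.1 + d = i.1 then -1 else 0

/-- A symplectic matrix. -/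
def IsSymplectic (d : ℕ) (S : Matrix (Fin (2 * d)) (Fin (2 * d)) ℝ) : Prop :=
  ∀ x y : E (2 * d), symp d (mapp S x) (mapp S y) = symp d x y

/-- The Heisenberg group law `(x,t)·(x',t') = (x+x', t+t'+σ(x,x'))`. -/
def hMul (d : ℕ) (z w : H d) : H d := (z.1 + w.1, z.2 + w.2 + symp d z.1 w.1)

/-- Inversion `(x,t)⁻¹ = (-x,-t)` in the Heisenberg group. -/
def hInv (d : ℕ) (z : H d) : H d := (-z.1, -z.2)

/-- The trilinear form for convolution on the Heisenberg group `ℍ^d`. -/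
def THeis (d : ℕ) (f : Fin 3 → H d → ℂ) : ℂ :=
  ∫ z1 : H d, ∫ z2 : H d, f 0 z1 * f 1 z2 * f 2 (hMul d (hInv d z2) (hInv d z1))

/-- The generators of the symmetry group `Σ(T_{ℍ^d})`: scalings, dilations, translations,
the diagonal action of the symplectic group, shear transformations, and modulations in `x`.
Each family of generators is closed under inversion, so the closure of this set under
composition is exactly the group generated by these symmetries. -/
def heisGens (d : ℕ) : Set (Function.End (Fin 3 → H d → ℂ)) :=
  {Ψ | (∃ a : Fin 3 → ℂ, (∀ j, a j ≠ 0) ∧ Ψ = fun f j z => a j * f j z) ∨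
       (∃ r : ℝ, 0 < r ∧ Ψ = fun f j z => f j (r • z.1, r ^ 2 * z.2)) ∨
       (∃ u : Fin 3 → H d, Ψ = fun f j z => f j (hMul d (hMul d (u j) z) (hInv d (u (j + 1))))) ∨
       (∃ S, IsSymplectic d S ∧ Ψ = fun f j z => f j (mapp S z.1, z.2)) ∨
       (∃ φ : E (2 * d) →ₗ[ℝ] ℝ, Ψ = fun f j z => f j (z.1, z.2 + φ z.1)) ∨
       (∃ u : E (2 * d), Ψ = fun f j z => Complex.exp (Complex.I * Complex.ofReal ⟪u, z.1⟫_ℝ) * f j z)}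

/-- The symmetry group `Σ(T_{ℍ^d})` (as a monoid of transformations; since the generating
set is closed under inversion this coincides with the generated group). -/
def heisSym (d : ℕ) : Submonoid (Function.End (Fin 3 → H d → ℂ)) :=
  Submonoid.closure (heisGens d)

/-- The canonical Gaussian `G(x,t) = exp(-|Lx|² - a t² + i b t)` on `ℍ^d`. -/
def canonGauss (d : ℕ) (L : Matrix (Fin (2 * d)) (Fin (2 * d)) ℝ) (a b : ℝ) : H d → ℂ :=
  fun z => Complex.exp (Complex.ofReal (-(‖mapp L z.1‖ ^ 2) - a * z.2 ^ 2) +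
    Complex.I * Complex.ofReal (b * z.2))

/-- The parameters `(L,a,b)` define a canonical `ε`-diffuse Gaussian. -/
def IsCanonDiffuse (d : ℕ) (ε : ℝ) (L : Matrix (Fin (2 * d)) (Fin (2 * d)) ℝ)
    (a b : ℝ) : Prop :=
  0 < a ∧ IsUnit L.det ∧ max (max a (Real.sqrt a)) b * opNorm L⁻¹ < ε

/-- `G` is an `ε`-diffuse, `p`-compatible ordered triple of Gaussians: `G = Ψ G̃` for a
symmetry `Ψ ∈ Σ(T_{ℍ^d})` and a `p`-compatible triple `G̃` of canonical `ε`-diffuse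
Gaussians, i.e. `G̃_j = exp(-|L_j x|² - a_j t² + i b_j t)` with `L_j = γ_j^{1/2} L`,
`a_j = γ_j a`, `b_j = b`. -/
def IsCompatibleDiffuse (d : ℕ) (p : Fin 3 → ℝ) (ε : ℝ) (G : Fin 3 → H d → ℂ) : Prop :=
  ∃ Ψ ∈ heisSym d, ∃ L : Matrix (Fin (2 * d)) (Fin (2 * d)) ℝ, ∃ a b : ℝ,
    (∀ j, IsCanonDiffuse d ε (Real.sqrt (γexp p j) • L) (γexp p j * a) b) ∧
    G = Ψ (fun j => canonGauss d (Real.sqrt (γexp p j) • L) (γexp p j * a) b)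

/-- The real Gaussian `exp(-γ_j(|x|²+t²))` on `ℝ^{2d} × ℝ`. -/
def gaussHR (d : ℕ) (p : Fin 3 → ℝ) (j : Fin 3) : H d → ℝ :=
  fun z => Real.exp (-(γexp p j * (‖z.1‖ ^ 2 + z.2 ^ 2)))

/-- The Gaussian `g_j(x,t) = exp(-γ_j(|x|²+t²))` on `ℝ^{2d} × ℝ`, complex-valued. -/
def gaussH (d : ℕ) (p : Fin 3 → ℝ) (j : Fin 3) : H d → ℂ :=
  fun z => Complex.ofReal (gaussHR d p j z)

/-- The generalized trilinear form `T(f,A,b)`. -/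
def Tgen (d : ℕ) (f : Fin 3 → H d → ℂ) (A : Matrix (Fin (2 * d)) (Fin (2 * d)) ℝ)
    (b : ℝ) : ℂ :=
  ∫ z1 : H d, ∫ z2 : H d,
    f 0 z1 * f 1 z2 *
      f 2 (-(z1.1 + z2.1), -(z1.2 + z2.2 + symp d (mapp A z1.1) (mapp A z2.1))) *
      Complex.exp (Complex.I * Complex.ofReal (b * symp d (mapp A z1.1) (mapp A z2.1)))

/-- The group law `(x,t)·_A(x',t') = (x+x', t+t'+σ(Ax,Ax'))`. -/
def hMulA (d : ℕ) (A : Matrix (Fin (2 * d)) (Fin (2 * d)) ℝ) (z w : H d) : H d :=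
  (z.1 + w.1, z.2 + w.2 + symp d (mapp A z.1) (mapp A w.1))

/-- The state space on which the symmetries of `T(f,A,b)` act: a triple of functions
together with the attached parameters `(A,b)`. -/
abbrev X (d : ℕ) : Type :=
  (Fin 3 → H d → ℂ) × Matrix (Fin (2 * d)) (Fin (2 * d)) ℝ × ℝ

/-- The generators of `𝔊₀`: the diagonal `GL(2d)` action and modulation in the last
coordinate. Each family is closed under inversion. -/
def G0gens (d : ℕ) : Set (Function.End (X d)) :=
  {Ψ | (∃ L : Matrix (Fin (2 * d)) (Fin (2 * d)) ℝ, IsUnit L.det ∧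
          Ψ = fun s => (fun j z => s.1 j (mapp L z.1, z.2), s.2.1 * L, s.2.2)) ∨
       (∃ ξ : ℝ,
          Ψ = fun s => (fun j z => Complex.exp (Complex.I * Complex.ofReal (ξ * z.2)) * s.1 j z,
            s.2.1, s.2.2 + ξ))}

/-- The group `𝔊₀` (as a monoid of transformations; the generating set is closed under
inversion so this coincides with the generated group). -/
def G0 (d : ℕ) : Submonoid (Function.End (X d)) := Submonoid.closure (G0gens d)

/-- The generators of `𝔊₁`: scalings, dilations, translation–modulation symmetries,
the diagonal symplectic action, shears, and modulations in `x`. -/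
def G1gens (d : ℕ) : Set (Function.End (X d)) :=
  {Ψ | (∃ a : Fin 3 → ℂ, (∀ j, a j ≠ 0) ∧
          Ψ = fun s => (fun j z => a j * s.1 j z, s.2.1, s.2.2)) ∨
       (∃ r : ℝ, 0 < r ∧
          Ψ = fun s => (fun j z => s.1 j (r • z.1, r ^ 2 * z.2), s.2.1, r ^ 2 * s.2.2)) ∨
       (∃ U : Fin 3 → H d,
          Ψ = fun s => (fun j z =>
            (if j = 0 then
                Complex.exp (Complex.I * Complex.ofReal
                  ⟪(-(s.2.2)) • mapp ((s.2.1)ᵀ * Jmat d * s.2.1) ((U 1).1 - (U 2).1), z.1⟫_ℝ)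
             else if j = 1 then
                Complex.exp (Complex.I * Complex.ofReal
                  ⟪(-(s.2.2)) • mapp (((s.2.1)ᵀ * Jmat d * s.2.1)ᵀ) ((U 0).1 - (U 1).1), z.1⟫_ℝ)
             else 1) *
            s.1 j (hMulA d s.2.1 (hMulA d s.2.1 (U j) z) (hInv d (U (j + 1)))),
           s.2.1, s.2.2)) ∨
       (∃ S, IsSymplectic d S ∧
          Ψ = fun s => (fun j z => s.1 j (mapp S z.1, z.2), s.2.1, s.2.2)) ∨
       (∃ φ : E (2 * d) →ₗ[ℝ] ℝ,
          Ψ = fun s => (fun j z => s.1 j (z.1, z.2 + φ z.1), s.2.1, s.2.2)) ∨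
       (∃ u : E (2 * d),
          Ψ = fun s => (fun j z => Complex.exp (Complex.I * Complex.ofReal ⟪u, z.1⟫_ℝ) * s.1 j z,
            s.2.1, s.2.2))}

/-- The group `𝔊₁` (as a monoid of transformations; the generating set is closed under
inversion so this coincides with the generated group). -/
def G1 (d : ℕ) : Submonoid (Function.End (X d)) := Submonoid.closure (G1gens d)

/-- The orbit `Õ(f,A,b)`: all `Ψ₀ Ψ₁ ((e^{-ibt} f) ∘ A⁻¹, Id, 0)` with `Ψ₀ ∈ 𝔊₀`,
`Ψ₁ ∈ 𝔊₁`. -/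
def tildeO (d : ℕ) (f : Fin 3 → H d → ℂ) (A : Matrix (Fin (2 * d)) (Fin (2 * d)) ℝ)
    (b : ℝ) : Set (X d) :=
  {y | ∃ Ψ₀ ∈ G0 d, ∃ Ψ₁ ∈ G1 d,
    y = Ψ₀ (Ψ₁ (fun j z => Complex.exp (-(Complex.I * Complex.ofReal (b * z.2))) *
          f j (mapp A⁻¹ z.1, z.2), 1, 0))}

/-- The squared distance `dist_p(Õ(f,A,b),(g,0,0))²`. -/
def distSq (d : ℕ) (p : Fin 3 → ℝ) (f : Fin 3 → H d → ℂ)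
    (A : Matrix (Fin (2 * d)) (Fin (2 * d)) ℝ) (b : ℝ) : ℝ :=
  sInf ((fun y => (tmax fun j => Lnorm (p j) (y.1 j - gaussH d p j)) ^ 2
      + opNorm ((y.2.1)ᵀ * Jmat d * y.2.1) ^ 2
      + y.2.2 ^ 2 * opNorm ((y.2.1)ᵀ * Jmat d * y.2.1) ^ 2) '' tildeO d f A b)

/-- The group–structure difference form `T'`. -/
def T'op (d : ℕ) (A : Matrix (Fin (2 * d)) (Fin (2 * d)) ℝ) (h : Fin 3 → H d → ℂ) : ℂ :=
  ∫ z1 : H d, ∫ z2 : H d, h 0 z1 * h 1 z2 *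
    (h 2 (-(z1.1 + z2.1), -(z1.2 + z2.2 + symp d (mapp A z1.1) (mapp A z2.1)))
      - h 2 (-(z1.1 + z2.1), -(z1.2 + z2.2)))

/-- The twisting–factor difference form `T''`. -/
def T''op (d : ℕ) (A : Matrix (Fin (2 * d)) (Fin (2 * d)) ℝ) (b : ℝ)
    (h : Fin 3 → H d → ℂ) : ℂ :=
  ∫ z1 : H d, ∫ z2 : H d, h 0 z1 * h 1 z2 *
    h 2 (-(z1.1 + z2.1), -(z1.2 + z2.2 + symp d (mapp A z1.1) (mapp A z2.1))) *
    (Complex.exp (Complex.I * Complex.ofReal (b * symp d (mapp A z1.1) (mapp A z2.1))) - 1)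

/-- The part `f_♯` of `f`: `f_♯(z) = f(z)` when `|f(z)| ≤ η g(z)`, else `0`. -/
def fSharp {α : Type*} (η : ℝ) (gR : α → ℝ) (f : α → ℂ) : α → ℂ :=
  fun z => if ‖f z‖ ≤ η * gR z then f z else 0

/-- The part `f_♭ = f - f_♯`. -/
def fFlat {α : Type*} (η : ℝ) (gR : α → ℝ) (f : α → ℂ) : α → ℂ :=
  fun z => f z - fSharp η gR f z

/-- The generators of the symmetry group of convolution on `ℝ^n`: scalings, translations
(with `v₁+v₂+v₃ = 0`), common modulations, and the diagonal `GL(n)` action. Each family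
is closed under inversion. -/
def euclGens (n : ℕ) : Set (Function.End (Fin 3 → E n → ℂ)) :=
  {Ψ | (∃ a : Fin 3 → ℂ, (∀ j, a j ≠ 0) ∧ Ψ = fun f j x => a j * f j x) ∨
       (∃ v : Fin 3 → E n, v 0 + v 1 + v 2 = 0 ∧ Ψ = fun f j x => f j (x + v j)) ∨
       (∃ ξ : E n, Ψ = fun f j x => Complex.exp (Complex.I * Complex.ofReal ⟪ξ, x⟫_ℝ) * f j x) ∨
       (∃ L : Matrix (Fin n) (Fin n) ℝ, IsUnit L.det ∧ Ψ = fun f j x => f j (mapp L x))}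

/-- The symmetry group of Euclidean convolution (as a monoid of transformations; the
generating set is closed under inversion so this coincides with the generated group). -/
def euclSym (n : ℕ) : Submonoid (Function.End (Fin 3 → E n → ℂ)) :=
  Submonoid.closure (euclGens n)

/-- The orbit `O(f)` of a triple under the symmetries of Euclidean convolution. -/
def euclOrbit (n : ℕ) (f : Fin 3 → E n → ℂ) : Set (Fin 3 → E n → ℂ) :=
  {h | ∃ Ψ ∈ euclSym n, h = Ψ f}

/-- `dist_p(O(f), g) = inf_{h ∈ O(f)} max_j ‖h_j - g_j‖_{p_j}`. -/
def euclDist (n : ℕ) (p : Fin 3 → ℝ) (f : Fin 3 → E n → ℂ) : ℝ :=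
  sInf ((fun h => tmax fun j => Lnorm (p j) (h j - gaussE n p j)) '' euclOrbit n f)

/-- `P` is the family of normalized orthogonal polynomials `P_n^{(t)}`: for `t > 0`,
`P_n^{(t)}` has degree `n`, positive leading coefficient, `‖P_n^{(t)} e^{-tπx²}‖_{L²} = 1`
and `P_n^{(t)} e^{-tπx²} ⊥ P_k^{(t)} e^{-tπx²}` for `k < n`. -/
def IsHermiteFamily (P : ℝ → ℕ → Polynomial ℝ) : Prop :=
  ∀ t : ℝ, 0 < t → ∀ n : ℕ,
    (P t n).degree = n ∧ 0 < (P t n).leadingCoeff ∧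
    (∫ x : ℝ, ((P t n).eval x) ^ 2 * Real.exp (-(2 * t * Real.pi * x ^ 2))) = 1 ∧
    ∀ k : ℕ, k < n →
      (∫ x : ℝ, (P t n).eval x * (P t k).eval x * Real.exp (-(2 * t * Real.pi * x ^ 2))) = 0

/-- `τ_j = p_j p_j' / 2`. -/
def τexp (p : Fin 3 → ℝ) (j : Fin 3) : ℝ := p j * conjExp (p j) / 2

/-- `⟨Re f_j, P_α^{(τ_j)} g_j^{p_j-1}⟩` on `ℝ^{2d+1}`. -/
def pairReE (d : ℕ) (p : Fin 3 → ℝ) (P : ℝ → ℕ → Polynomial ℝ)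
    (f : Fin 3 → E (2 * d + 1) → ℂ) (j : Fin 3) (α : Fin (2 * d + 1) → ℕ) : ℝ :=
  ∫ z : E (2 * d + 1), (f j z).re * (∏ k, (P (τexp p j) (α k)).eval (z k)) *
    (gaussER (2 * d + 1) p j z) ^ (p j - 1)

/-- `⟨Im f_j, P_α^{(τ_j)} g_j^{p_j-1}⟩` on `ℝ^{2d+1}`. -/
def pairImE (d : ℕ) (p : Fin 3 → ℝ) (P : ℝ → ℕ → Polynomial ℝ)
    (f : Fin 3 → E (2 * d + 1) → ℂ) (j : Fin 3) (α : Fin (2 * d + 1) → ℕ) : ℝ :=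
  ∫ z : E (2 * d + 1), (f j z).im * (∏ k, (P (τexp p j) (α k)).eval (z k)) *
    (gaussER (2 * d + 1) p j z) ^ (p j - 1)

/-- The orthogonality conditions of the sharpened Young inequality, on `ℝ^{2d+1}`. -/
def OrthCondsE (d : ℕ) (p : Fin 3 → ℝ) (P : ℝ → ℕ → Polynomial ℝ)
    (f : Fin 3 → E (2 * d + 1) → ℂ) : Prop :=
  (∀ j, pairReE d p P f j 0 = 0 ∧ pairImE d p P f j 0 = 0) ∧
  (∀ α : Fin (2 * d + 1) → ℕ, (∑ k, α k) = 1 →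
      pairReE d p P f 0 α = 0 ∧ pairReE d p P f 1 α = 0 ∧ pairImE d p P f 2 α = 0) ∧
  (∀ α : Fin (2 * d + 1) → ℕ, (∑ k, α k) = 2 → pairReE d p P f 2 α = 0)

/-- The `k`-th coordinate of a point of `ℝ^{2d} × ℝ`, viewed as a point of `ℝ^{2d+1}`. -/
def coordH (d : ℕ) (z : H d) (k : Fin (2 * d + 1)) : ℝ :=
  if h : (k : ℕ) < 2 * d then z.1 ⟨k, h⟩ else z.2

/-- `⟨Re f_j, P_α^{(τ_j)} g_j^{p_j-1}⟩` on `ℝ^{2d} × ℝ ≅ ℝ^{2d+1}`. -/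
def pairReH (d : ℕ) (p : Fin 3 → ℝ) (P : ℝ → ℕ → Polynomial ℝ)
    (f : Fin 3 → H d → ℂ) (j : Fin 3) (α : Fin (2 * d + 1) → ℕ) : ℝ :=
  ∫ z : H d, (f j z).re * (∏ k, (P (τexp p j) (α k)).eval (coordH d z k)) *
    (gaussHR d p j z) ^ (p j - 1)

/-- `⟨Im f_j, P_α^{(τ_j)} g_j^{p_j-1}⟩` on `ℝ^{2d} × ℝ ≅ ℝ^{2d+1}`. -/
def pairImH (d : ℕ) (p : Fin 3 → ℝ) (P : ℝ → ℕ → Polynomial ℝ)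
    (f : Fin 3 → H d → ℂ) (j : Fin 3) (α : Fin (2 * d + 1) → ℕ) : ℝ :=
  ∫ z : H d, (f j z).im * (∏ k, (P (τexp p j) (α k)).eval (coordH d z k)) *
    (gaussHR d p j z) ^ (p j - 1)

/-- The orthogonality conditions, on `ℝ^{2d} × ℝ ≅ ℝ^{2d+1}`. -/
def OrthCondsH (d : ℕ) (p : Fin 3 → ℝ) (P : ℝ → ℕ → Polynomial ℝ)
    (f : Fin 3 → H d → ℂ) : Prop :=
  (∀ j, pairReH d p P f j 0 = 0 ∧ pairImH d p P f j 0 = 0) ∧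
  (∀ α : Fin (2 * d + 1) → ℕ, (∑ k, α k) = 1 →
      pairReH d p P f 0 α = 0 ∧ pairReH d p P f 1 α = 0 ∧ pairImH d p P f 2 α = 0) ∧
  (∀ α : Fin (2 * d + 1) → ℕ, (∑ k, α k) = 2 → pairReH d p P f 2 α = 0)



set_option synthInstance.maxHeartbeats 1000000
set_option maxHeartbeats 2000000

/-! ### Auxiliary lemmas for Statement 14 -/

section Aux14

lemma mapp_apply' {n} (M : Matrix (Fin n) (Fin n) ℝ) (v : E n) (i : Fin n) :
    mapp M v i = ∑ k, M i k * v k := by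
  simp [mapp, Matrix.toEuclideanLin_apply, Matrix.mulVec, dotProduct]

lemma inner_eq' {n} (x y : E n) : ⟪x, y⟫_ℝ = ∑ i, x i * y i := by
  simp [PiLp.inner_apply, RCLike.inner_apply, mul_comm]

lemma mapp_mapp {n} (M N : Matrix (Fin n) (Fin n) ℝ) (v : E n) :
    mapp M (mapp N v) = mapp (M * N) v := by
  simp [mapp, Matrix.toEuclideanLin_apply, Matrix.mulVec_mulVec]

lemma opNorm_nonneg' {n} (M : Matrix (Fin n) (Fin n) ℝ) : 0 ≤ opNorm M := by
  unfold opNorm; exact norm_nonneg _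

lemma norm_mapp_le {n} (M : Matrix (Fin n) (Fin n) ℝ) (v : E n) :
    ‖mapp M v‖ ≤ opNorm M * ‖v‖ := by
  have := (LinearMap.toContinuousLinearMap (Matrix.toEuclideanLin (𝕜 := ℝ) M)).le_opNorm v
  simpa [mapp, opNorm] using this

lemma abs_inner_mapp_le {n} (M : Matrix (Fin n) (Fin n) ℝ) (x y : E n) :
    |⟪x, mapp M y⟫_ℝ| ≤ opNorm M * ‖x‖ * ‖y‖ := by
  calc |⟪x, mapp M y⟫_ℝ| ≤ ‖x‖ * ‖mapp M y‖ := abs_real_inner_le_norm _ _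
  _ ≤ ‖x‖ * (opNorm M * ‖y‖) := by
      exact mul_le_mul_of_nonneg_left (norm_mapp_le M y) (norm_nonneg x)
  _ = opNorm M * ‖x‖ * ‖y‖ := by ring

lemma Jmat_mapp_apply (d : ℕ) (y : E (2*d)) (i : Fin (2*d)) :
    mapp (Jmat d) y i =
      if h : (i:ℕ) < d then y ⟨(i:ℕ) + d, by omega⟩ else - y ⟨(i:ℕ) - d, by have := i.2; omega⟩ := by
  rw [mapp_apply']
  by_cases h : (i:ℕ) < d
  · rw [dif_pos h]
    rw [Finset.sum_eq_single (⟨(i:ℕ)+d, by omega⟩ : Fin (2*d))]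
    · simp [Jmat, h]
    · intro k _ hk
      have hk' : ¬ ((k:ℕ) = (i:ℕ) + d) := fun hc => hk (Fin.ext hc)
      simp only [Jmat, Matrix.of_apply]
      rw [if_neg (by tauto), if_neg (by omega), zero_mul]
    · intro hc; exact absurd (Finset.mem_univ _) hc
  · rw [dif_neg h]
    rw [Finset.sum_eq_single (⟨(i:ℕ)-d, by have := i.2; omega⟩ : Fin (2*d))]
    · simp only [Jmat, Matrix.of_apply, Fin.val_mk]
      rw [if_neg (by omega), if_pos (by omega)]
      ring
    · intro k _ hk
      have hk' : ¬ ((k:ℕ) + d = (i:ℕ)) := by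
        intro hc
        exact hk (Fin.ext (show (k:ℕ) = (i:ℕ) - d by omega))
      simp only [Jmat, Matrix.of_apply]
      rw [if_neg (by omega), if_neg hk', zero_mul]
    · intro hc; exact absurd (Finset.mem_univ _) hc

lemma symp_eq_inner (d : ℕ) (x y : E (2*d)) : symp d x y = ⟪x, mapp (Jmat d) y⟫_ℝ := by
  have h2d : d + d = 2*d := by omega
  rw [inner_eq']
  set G : Fin (2*d) → ℝ := fun i => x i * mapp (Jmat d) y i with hG
  have hsplit : ∑ i : Fin (2*d), G i
      = ∑ j : Fin d, G (Fin.cast h2d (Fin.castAdd d j))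
        + ∑ j : Fin d, G (Fin.cast h2d (Fin.natAdd d j)) := by
    rw [← Fin.sum_univ_add (f := fun j : Fin (d+d) => G (Fin.cast h2d j))]
    exact (Fintype.sum_equiv (finCongr h2d) _ _ (fun j => rfl)).symm
  rw [hsplit]
  have hA : ∀ j : Fin d, G (Fin.cast h2d (Fin.castAdd d j))
      = x ⟨j.1, by have := j.2; omega⟩ * y ⟨j.1 + d, by have := j.2; omega⟩ := by
    intro j
    have h1 : (Fin.cast h2d (Fin.castAdd d j)) = (⟨j.1, by have := j.2; omega⟩ : Fin (2*d)) := rfl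
    simp only [hG]
    rw [h1, Jmat_mapp_apply, dif_pos (show (j:ℕ) < d from j.2)]
  have hB : ∀ j : Fin d, G (Fin.cast h2d (Fin.natAdd d j))
      = -(x ⟨j.1 + d, by have := j.2; omega⟩ * y ⟨j.1, by have := j.2; omega⟩) := by
    intro j
    have h1 : (Fin.cast h2d (Fin.natAdd d j)) = (⟨j.1 + d, by have := j.2; omega⟩ : Fin (2*d)) := by
      apply Fin.ext; simp [Nat.add_comm]
    simp only [hG]
    rw [h1, Jmat_mapp_apply, dif_neg (by simp)]
    have h2 : (⟨(j:ℕ) + d - d, by have := j.2; omega⟩ : Fin (2*d)) = (⟨j.1, by have := j.2; omega⟩ : Fin (2*d)) := by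
      apply Fin.ext; simp
    rw [h2]
    ring
  rw [Finset.sum_congr rfl (fun j _ => hA j), Finset.sum_congr rfl (fun j _ => hB j)]
  unfold symp
  rw [Finset.sum_sub_distrib, Finset.sum_neg_distrib]
  ring

lemma inner_mapp_transpose {n} (A : Matrix (Fin n) (Fin n) ℝ) (u v : E n) :
    ⟪mapp A u, v⟫_ℝ = ⟪u, mapp Aᵀ v⟫_ℝ := by
  rw [inner_eq', inner_eq']
  simp only [mapp_apply', Finset.sum_mul, Finset.mul_sum]
  rw [Finset.sum_comm]
  refine Finset.sum_congr rfl fun i _ => Finset.sum_congr rfl fun k _ => ?_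
  rw [Matrix.transpose_apply]
  ring

lemma symp_mapp (d : ℕ) (A : Matrix (Fin (2*d)) (Fin (2*d)) ℝ) (x y : E (2*d)) :
    symp d (mapp A x) (mapp A y) = ⟪x, mapp (Aᵀ * Jmat d * A) y⟫_ℝ := by
  rw [symp_eq_inner, inner_mapp_transpose]
  congr 1
  rw [mapp_mapp, mapp_mapp, Matrix.mul_assoc]

lemma abs_symp_mapp_le (d : ℕ) (A : Matrix (Fin (2*d)) (Fin (2*d)) ℝ) (x y : E (2*d)) :
    |symp d (mapp A x) (mapp A y)| ≤ opNorm (Aᵀ * Jmat d * A) * ‖x‖ * ‖y‖ := by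
  rw [symp_mapp]
  exact abs_inner_mapp_le _ _ _

lemma abs_exp_I_mul_sub_one (r : ℝ) :
    ‖Complex.exp (Complex.I * r) - 1‖ ≤ |r| := by
  have h1 : Complex.exp (Complex.I * r) - 1
      = ((Real.cos r - 1 : ℝ) : ℂ) + ((Real.sin r : ℝ) : ℂ) * Complex.I := by
    rw [mul_comm, Complex.exp_mul_I]
    push_cast [Complex.ofReal_cos, Complex.ofReal_sin]
    ring
  rw [h1, Complex.norm_add_mul_I]
  have h2 : (Real.cos r - 1) ^ 2 + Real.sin r ^ 2 ≤ r ^ 2 := by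
    have := Real.one_sub_sq_div_two_le_cos (x := r)
    nlinarith [Real.sin_sq_add_cos_sq r]
  calc Real.sqrt ((Real.cos r - 1) ^ 2 + Real.sin r ^ 2) ≤ Real.sqrt (r ^ 2) :=
        Real.sqrt_le_sqrt h2
  _ = |r| := Real.sqrt_sq_eq_abs r

lemma exp_rpow' (a y : ℝ) : (Real.exp a) ^ y = Real.exp (a * y) := by
  rw [Real.rpow_def_of_pos (Real.exp_pos a), Real.log_exp]

lemma min_le_rpow_mul_rpow (a b : ℝ) (ha : 0 ≤ a) (hb : 0 ≤ b) :
    min a b ≤ a ^ (3/4 : ℝ) * b ^ (1/4 : ℝ) := by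
  have hm : 0 ≤ min a b := le_min ha hb
  have h : min a b = (min a b) ^ (3/4 : ℝ) * (min a b) ^ (1/4 : ℝ) := by
    rw [← Real.rpow_add' hm (by norm_num)]; norm_num
  rw [h]
  exact mul_le_mul (Real.rpow_le_rpow hm (min_le_left _ _) (by norm_num))
    (Real.rpow_le_rpow hm (min_le_right _ _) (by norm_num))
    (Real.rpow_nonneg hm _) (Real.rpow_nonneg ha _)

lemma aux_mul_exp_bound {s u : ℝ} (hs : 0 < s) (hu : 0 ≤ u) :
    u * Real.exp (-(s * u ^ 2)) ≤ max 1 s⁻¹ := by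
  rcases le_or_gt u 1 with h | h
  · have h1 : Real.exp (-(s * u ^ 2)) ≤ 1 :=
      Real.exp_le_one_iff.mpr (by nlinarith)
    calc u * Real.exp (-(s * u ^ 2)) ≤ 1 * 1 :=
          mul_le_mul h h1 (Real.exp_pos _).le (by norm_num)
    _ ≤ max 1 s⁻¹ := by simp
  · have hA := Real.add_one_le_exp (s * u ^ 2)
    have hB := (Real.exp_pos (-(s * u ^ 2))).le
    have hAB : Real.exp (s * u ^ 2) * Real.exp (-(s * u ^ 2)) = 1 := by
      rw [← Real.exp_add]; simp
    have hsu : s * u ≤ Real.exp (s * u ^ 2) := by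
      nlinarith [mul_nonneg (mul_nonneg hs.le hu) (sub_nonneg.mpr h.le)]
    have key : u * Real.exp (-(s * u ^ 2)) ≤ s⁻¹ := by
      rw [inv_eq_one_div, le_div_iff₀ hs]
      nlinarith [mul_nonneg (sub_nonneg.mpr hsu) hB]
    exact key.trans (le_max_right _ _)

lemma integrable_gauss_E (n : ℕ) {c : ℝ} (hc : 0 < c) :
    Integrable (fun x : EuclideanSpace ℝ (Fin n) => Real.exp (-(c * ‖x‖ ^ 2))) := by
  have h := (GaussianFourier.integrable_cexp_neg_mul_sq_norm_add
    (V := EuclideanSpace ℝ (Fin n)) (b := (c : ℂ)) (by simpa using hc) 0 0).norm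
  refine h.congr (Eventually.of_forall fun v => ?_)
  show ‖Complex.exp (-(c:ℂ) * (‖v‖:ℂ) ^ 2 + 0 * ((⟪0, v⟫_ℝ : ℝ) : ℂ))‖ = Real.exp (-(c * ‖v‖ ^ 2))
  rw [Complex.norm_exp]
  congr 1
  simp [← Complex.ofReal_pow]

lemma memLp_of_integrable_rpow {α : Type*} [MeasureSpace α] {f : α → ℝ} {q : ℝ} (hq : 1 ≤ q)
    (hm : AEStronglyMeasurable f (volume : Measure α))
    (hi : Integrable (fun x => |f x| ^ q) (volume : Measure α)) :
    MemLp f (ENNReal.ofReal q) (volume : Measure α) := by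
  have hq0 : 0 < q := by linarith
  refine ⟨hm, ?_⟩
  rw [eLpNorm_eq_lintegral_rpow_enorm_toReal (by simp [hq0]) (by simp), ENNReal.toReal_ofReal hq0.le]
  apply ENNReal.rpow_lt_top_of_nonneg (by positivity)
  have hcong : ∀ x, ‖f x‖ₑ ^ q = ‖|f x| ^ q‖ₑ := by
    intro x
    rw [Real.enorm_eq_ofReal_abs, Real.enorm_eq_ofReal_abs,
      abs_of_nonneg (Real.rpow_nonneg (abs_nonneg _) _),
      ENNReal.ofReal_rpow_of_nonneg (abs_nonneg _) hq0.le]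
  rw [lintegral_congr hcong]
  exact hi.2.ne

/-- The weight function for the Hölder estimate. -/
def W (d : ℕ) (c : ℝ) (z : H d) : ℝ :=
  Real.exp (-(c * ‖z.1‖ ^ 2)) * ‖z.1‖ * Real.exp (-(c * z.2 ^ 2))

lemma W_nonneg (d : ℕ) (c : ℝ) (z : H d) : 0 ≤ W d c z := by
  unfold W; positivity

lemma integrable_gauss_prod (d : ℕ) {c : ℝ} (hc : 0 < c) :
    Integrable (fun z : H d => Real.exp (-(c * ‖z.1‖ ^ 2)) * Real.exp (-(c * z.2 ^ 2)))
      (volume : Measure (H d)) := by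
  have hA := integrable_gauss_E (2*d) hc
  have hB : Integrable (fun t : ℝ => Real.exp (-(c * t ^ 2))) := by
    have := integrable_exp_neg_mul_sq hc
    simpa [neg_mul] using this
  have := hA.mul_prod hB
  rwa [← MeasureTheory.Measure.volume_eq_prod] at this

lemma continuous_gauss_prod (d : ℕ) (c : ℝ) :
    Continuous (fun z : H d => Real.exp (-(c * ‖z.1‖ ^ 2)) * Real.exp (-(c * z.2 ^ 2))) := by
  fun_prop

lemma memLp_gauss_prod (d : ℕ) {c q : ℝ} (hc : 0 < c) (hq : 1 ≤ q) :
    MemLp (fun z : H d => Real.exp (-(c * ‖z.1‖ ^ 2)) * Real.exp (-(c * z.2 ^ 2)))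
      (ENNReal.ofReal q) (volume : Measure (H d)) := by
  apply memLp_of_integrable_rpow hq (continuous_gauss_prod d c).aestronglyMeasurable
  have hcq : 0 < c * q := by positivity
  apply (integrable_gauss_prod d hcq).congr
  refine Eventually.of_forall fun z => ?_
  show Real.exp (-(c * q * ‖z.1‖ ^ 2)) * Real.exp (-(c * q * z.2 ^ 2))
      = |Real.exp (-(c * ‖z.1‖ ^ 2)) * Real.exp (-(c * z.2 ^ 2))| ^ q
  rw [abs_of_nonneg (by positivity), Real.mul_rpow (Real.exp_pos _).le (Real.exp_pos _).le,
    exp_rpow', exp_rpow']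
  ring_nf

lemma memLp_W (d : ℕ) {c q : ℝ} (hc : 0 < c) (hq : 1 ≤ q) :
    MemLp (W d c) (ENNReal.ofReal q) (volume : Measure (H d)) := by
  have hc2 : 0 < c / 2 := by linarith
  refine MemLp.of_le ((memLp_gauss_prod d hc2 hq).const_mul (max 1 (c/2)⁻¹))
    (by apply Continuous.aestronglyMeasurable; unfold W; fun_prop) ?_
  refine Eventually.of_forall fun z => ?_
  rw [Real.norm_of_nonneg (W_nonneg d c z), Real.norm_of_nonneg (by positivity)]
  unfold W
  have h1 : Real.exp (-(c * ‖z.1‖ ^ 2))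
      = Real.exp (-(c/2 * ‖z.1‖ ^ 2)) * Real.exp (-(c/2 * ‖z.1‖ ^ 2)) := by
    rw [← Real.exp_add]; ring_nf
  have h2 : Real.exp (-(c * z.2 ^ 2)) ≤ Real.exp (-(c/2 * z.2 ^ 2)) := by
    apply Real.exp_le_exp.mpr; nlinarith [sq_nonneg z.2]
  rw [h1]
  calc Real.exp (-(c/2 * ‖z.1‖ ^ 2)) * Real.exp (-(c/2 * ‖z.1‖ ^ 2)) * ‖z.1‖
        * Real.exp (-(c * z.2 ^ 2))
      ≤ Real.exp (-(c/2 * ‖z.1‖ ^ 2)) * Real.exp (-(c/2 * ‖z.1‖ ^ 2)) * ‖z.1‖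
        * Real.exp (-(c/2 * z.2 ^ 2)) := by
        apply mul_le_mul_of_nonneg_left h2; positivity
  _ = (‖z.1‖ * Real.exp (-(c/2 * ‖z.1‖ ^ 2)))
        * (Real.exp (-(c/2 * ‖z.1‖ ^ 2)) * Real.exp (-(c/2 * z.2 ^ 2))) := by ring
  _ ≤ max 1 (c/2)⁻¹ * (Real.exp (-(c/2 * ‖z.1‖ ^ 2)) * Real.exp (-(c/2 * z.2 ^ 2))) := by
        apply mul_le_mul_of_nonneg_right (aux_mul_exp_bound hc2 (norm_nonneg _)); positivity

lemma memLp_norm_three_quarters {d : ℕ} {f : H d → ℂ} {p : ℝ}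
    (hf : MemLp f (ENNReal.ofReal p) (volume : Measure (H d))) :
    MemLp (fun z => ‖f z‖ ^ (3/4 : ℝ)) (ENNReal.ofReal (4 * p / 3))
      (volume : Measure (H d)) := by
  have h := hf.norm_rpow_div (ENNReal.ofReal (3/4))
  have ht : (ENNReal.ofReal (3/4 : ℝ)).toReal = (3/4 : ℝ) := ENNReal.toReal_ofReal (by norm_num)
  rw [ht] at h
  have he : ENNReal.ofReal p / ENNReal.ofReal (3/4 : ℝ) = ENNReal.ofReal (4 * p / 3) := by
    rw [← ENNReal.ofReal_div_of_pos (by norm_num)]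
    congr 1; ring
  rwa [he] at h

lemma integrable_phi {d : ℕ} {f : H d → ℂ} {p c : ℝ} (hp : 1 < p) (hc : 0 < c)
    (hf : MemLp f (ENNReal.ofReal p) (volume : Measure (H d))) :
    Integrable (fun z : H d => ‖f z‖ ^ (3/4 : ℝ) * W d c z) (volume : Measure (H d)) := by
  set r : ℝ := 4 * p / 3 with hrdef
  have hr1 : 1 < r := by rw [hrdef]; linarith
  have hrs : r.HolderConjugate (Real.conjExponent r) := Real.HolderConjugate.conjExponent hr1
  have hu := memLp_norm_three_quarters hf
  have hw := memLp_W d hc hrs.symm.lt.le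
  haveI hpqr : ENNReal.HolderTriple (ENNReal.ofReal r) (ENNReal.ofReal (Real.conjExponent r)) 1 :=
    ⟨by simpa using hrs.inv_add_inv_ennreal⟩
  have h := (hw.smul hu : MemLp ((fun z => ‖f z‖ ^ (3/4:ℝ)) • W d c) 1 volume)
  rw [memLp_one_iff_integrable] at h
  exact h.congr (Eventually.of_forall fun z => by simp [Pi.smul_apply', smul_eq_mul])

lemma holder_key {d : ℕ} {f : H d → ℂ} {p c : ℝ} (hp : 1 < p) (hc : 0 < c)
    (hf : MemLp f (ENNReal.ofReal p) (volume : Measure (H d))) :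
    ∫ z, ‖f z‖ ^ (3/4 : ℝ) * W d c z
      ≤ (Lnorm p f) ^ (3/4 : ℝ)
        * (∫ z, W d c z ^ Real.conjExponent (4*p/3)) ^ (1 / Real.conjExponent (4*p/3)) := by
  set r : ℝ := 4 * p / 3 with hrdef
  have hr1 : 1 < r := by rw [hrdef]; linarith
  have hrs : r.HolderConjugate (Real.conjExponent r) := Real.HolderConjugate.conjExponent hr1
  set s : ℝ := Real.conjExponent r with hsdef
  have hs1 : 1 ≤ s := hrs.symm.lt.le
  have hu := memLp_norm_three_quarters hf
  have hw := memLp_W d hc hs1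
  have HH := integral_mul_le_Lp_mul_Lq_of_nonneg hrs
    (Eventually.of_forall fun z => Real.rpow_nonneg (norm_nonneg _) _)
    (Eventually.of_forall fun z => W_nonneg d c z) hu hw
  refine HH.trans (le_of_eq ?_)
  congr 1
  have hpt : ∀ z : H d, (‖f z‖ ^ (3/4 : ℝ)) ^ r = ‖f z‖ ^ p := by
    intro z
    rw [← Real.rpow_mul (norm_nonneg _)]
    congr 1
    rw [hrdef]; ring
  rw [integral_congr_ae (Eventually.of_forall fun z => hpt z)]
  unfold Lnorm
  rw [← Real.rpow_mul (integral_nonneg fun z => Real.rpow_nonneg (norm_nonneg _) _)]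
  congr 1
  rw [hrdef]
  field_simp

lemma rpow_half_mul_self {x : ℝ} (hx : 0 ≤ x) : x ^ (1/2:ℝ) * x ^ (1/2:ℝ) = x := by
  rw [← Real.rpow_add' hx (by norm_num)]; norm_num

lemma final_arith (C1 C2 ε a1 a2 bb m : ℝ) (hC1 : 0 ≤ C1) (hC2 : 0 ≤ C2) (hε : 0 < ε)
    (ha1 : 0 ≤ a1) (ha2 : 0 ≤ a2) (hm : 0 ≤ m)
    (h1 : a1 ≤ min 1 ((ε/(C1*C2+1))^2)) (h2 : a2 ≤ min 1 ((ε/(C1*C2+1))^2))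
    (h3 : |bb| * m ≤ min 1 ((ε/(C1*C2+1))^2)) :
    (|bb| * m) * (a2 ^ (3/4:ℝ) * C2) * (a1 ^ (3/4:ℝ) * C1)
      ≤ ε * (a1^2 + a2^2 + (1+bb^2)*m^2) := by
  set C : ℝ := C1 * C2 + 1 with hCdef
  have hC : 0 < C := by positivity
  set δ : ℝ := min 1 ((ε/C)^2) with hδdef
  have hδ0 : 0 ≤ δ := le_min (by norm_num) (by positivity)
  set t : ℝ := |bb| * m with htdef
  have ht0 : 0 ≤ t := mul_nonneg (abs_nonneg _) hm
  have key1 : a1 ^ (3/4:ℝ) ≤ δ ^ (1/4:ℝ) * a1 ^ (1/2:ℝ) := by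
    have e : a1 ^ (3/4:ℝ) = a1 ^ (1/4:ℝ) * a1 ^ (1/2:ℝ) := by
      rw [← Real.rpow_add' ha1 (by norm_num)]; norm_num
    rw [e]
    exact mul_le_mul_of_nonneg_right (Real.rpow_le_rpow ha1 h1 (by norm_num))
      (Real.rpow_nonneg ha1 _)
  have key2 : a2 ^ (3/4:ℝ) ≤ δ ^ (1/4:ℝ) * a2 ^ (1/2:ℝ) := by
    have e : a2 ^ (3/4:ℝ) = a2 ^ (1/4:ℝ) * a2 ^ (1/2:ℝ) := by
      rw [← Real.rpow_add' ha2 (by norm_num)]; norm_num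
    rw [e]
    exact mul_le_mul_of_nonneg_right (Real.rpow_le_rpow ha2 h2 (by norm_num))
      (Real.rpow_nonneg ha2 _)
  have key3 : δ ^ (1/4:ℝ) * δ ^ (1/4:ℝ) = δ ^ (1/2:ℝ) := by
    rw [← Real.rpow_add' hδ0 (by norm_num)]; norm_num
  have key4 : δ ^ (1/2:ℝ) * C ≤ ε := by
    have hx : (0:ℝ) ≤ ε / C := by positivity
    have hd : δ ^ (1/2:ℝ) ≤ ((ε/C)^2) ^ (1/2:ℝ) :=
      Real.rpow_le_rpow hδ0 (min_le_right _ _) (by norm_num)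
    have he : ((ε/C)^2 : ℝ) ^ (1/2:ℝ) = ε / C := by
      rw [← Real.rpow_natCast (ε/C) 2, ← Real.rpow_mul hx]
      norm_num
    rw [he] at hd
    calc δ ^ (1/2:ℝ) * C ≤ (ε/C) * C := mul_le_mul_of_nonneg_right hd hC.le
    _ = ε := by field_simp
  have hX : a1 ^ (1/2:ℝ) * a1 ^ (1/2:ℝ) = a1 := rpow_half_mul_self ha1
  have hY : a2 ^ (1/2:ℝ) * a2 ^ (1/2:ℝ) = a2 := rpow_half_mul_self ha2
  have hZ : a1 ^ (1/2:ℝ) * a2 ^ (1/2:ℝ) * t ≤ a1 * a2 + t^2 := by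
    nlinarith [sq_nonneg (a1 ^ (1/2:ℝ) * a2 ^ (1/2:ℝ) - t),
      Real.rpow_nonneg ha1 (1/2:ℝ), Real.rpow_nonneg ha2 (1/2:ℝ)]
  calc t * (a2 ^ (3/4:ℝ) * C2) * (a1 ^ (3/4:ℝ) * C1)
      ≤ t * ((δ ^ (1/4:ℝ) * a2 ^ (1/2:ℝ)) * C2) * ((δ ^ (1/4:ℝ) * a1 ^ (1/2:ℝ)) * C1) := by
        gcongr
  _ = (C1 * C2 * (δ ^ (1/4:ℝ) * δ ^ (1/4:ℝ))) * (a1 ^ (1/2:ℝ) * a2 ^ (1/2:ℝ) * t) := by ring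
  _ = (C1 * C2 * δ ^ (1/2:ℝ)) * (a1 ^ (1/2:ℝ) * a2 ^ (1/2:ℝ) * t) := by rw [key3]
  _ ≤ (C1 * C2 * δ ^ (1/2:ℝ)) * (a1 * a2 + t^2) := by
        apply mul_le_mul_of_nonneg_left hZ (by positivity)
  _ ≤ ε * (a1 * a2 + t^2) := by
        apply mul_le_mul_of_nonneg_right _ (by nlinarith)
        calc C1 * C2 * δ ^ (1/2:ℝ) ≤ C * δ ^ (1/2:ℝ) := by
              apply mul_le_mul_of_nonneg_right _ (Real.rpow_nonneg hδ0 _)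
              rw [hCdef]; linarith
        _ ≤ ε := by rw [mul_comm]; exact key4
  _ ≤ ε * (a1^2 + a2^2 + (1+bb^2)*m^2) := by
        apply mul_le_mul_of_nonneg_left _ hε.le
        have ht2 : t^2 = bb^2 * m^2 := by rw [htdef, mul_pow, sq_abs]
        nlinarith [sq_nonneg (a1 - a2), sq_nonneg m]

lemma gammaexp_pos {p : Fin 3 → ℝ} (hp : IsAdmissible p) (j : Fin 3) : 0 < γexp p j := by
  have h := hp.1 j
  have h1 : 0 < p j - 1 := by linarith
  have h2 : 0 < conjExp (p j) := div_pos (by linarith) h1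
  exact mul_pos Real.pi_pos h2

lemma gaussHR_pos (d : ℕ) (p : Fin 3 → ℝ) (j : Fin 3) (z : H d) : 0 < gaussHR d p j z :=
  Real.exp_pos _

lemma gaussHR_le_one {d : ℕ} {p : Fin 3 → ℝ} (hp : IsAdmissible p) (j : Fin 3) (z : H d) :
    gaussHR d p j z ≤ 1 := by
  apply Real.exp_le_one_iff.mpr
  have h1 : 0 ≤ ‖z.1‖ ^ 2 + z.2 ^ 2 := by positivity
  have h2 := (gammaexp_pos hp j).le
  have := mul_nonneg h2 h1
  linarith

lemma gaussHR_quarter (d : ℕ) (p : Fin 3 → ℝ) (j : Fin 3) (z : H d) :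
    (gaussHR d p j z) ^ (1/4 : ℝ)
      = Real.exp (-(γexp p j / 4 * ‖z.1‖ ^ 2)) * Real.exp (-(γexp p j / 4 * z.2 ^ 2)) := by
  unfold gaussHR
  rw [exp_rpow', ← Real.exp_add]
  congr 1
  ring

lemma norm_fSharp_le {d : ℕ} {p : Fin 3 → ℝ} (hp : IsAdmissible p) {η : ℝ}
    (hη : η ∈ Set.Ioo (0:ℝ) 1) (j : Fin 3) (f : H d → ℂ) (z : H d) :
    ‖fSharp η (gaussHR d p j) f z‖
      ≤ ‖f z‖ ^ (3/4 : ℝ)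
        * (Real.exp (-(γexp p j / 4 * ‖z.1‖ ^ 2)) * Real.exp (-(γexp p j / 4 * z.2 ^ 2))) := by
  have hg := gaussHR_pos d p j z
  have hη0 : 0 < η := hη.1
  have hηg : 0 ≤ η * gaussHR d p j z := mul_nonneg hη0.le hg.le
  have hmin : ‖fSharp η (gaussHR d p j) f z‖ ≤ min ‖f z‖ (η * gaussHR d p j z) := by
    unfold fSharp
    split_ifs with h
    · exact le_min le_rfl h
    · simp only [norm_zero]
      exact le_min (norm_nonneg _) hηg
  refine hmin.trans ?_
  refine (min_le_rpow_mul_rpow ‖f z‖ (η * gaussHR d p j z) (norm_nonneg _)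
    hηg).trans ?_
  rw [← gaussHR_quarter]
  apply mul_le_mul_of_nonneg_left _ (Real.rpow_nonneg (norm_nonneg _) _)
  apply Real.rpow_le_rpow hηg _ (by norm_num)
  calc η * gaussHR d p j z ≤ 1 * gaussHR d p j z :=
        mul_le_mul_of_nonneg_right hη.2.le hg.le
  _ = gaussHR d p j z := one_mul _

lemma Lnorm_nonneg {α : Type*} [MeasureSpace α] (q : ℝ) (f : α → ℂ) : 0 ≤ Lnorm q f :=
  Real.rpow_nonneg (integral_nonneg fun z => Real.rpow_nonneg (norm_nonneg _) _) _

end Aux14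

/-- `T''` with two sharp perturbations. -/
theorem statement14 (d : ℕ) (hd : 1 ≤ d) (p : Fin 3 → ℝ) (hp : IsAdmissible p)
    (η : ℝ) (hη : η ∈ Set.Ioo (0 : ℝ) 1) :
    ∀ ε : ℝ, 0 < ε → ∃ δ : ℝ, 0 < δ ∧
      ∀ f1 f2 : H d → ℂ, MemLp f1 (ENNReal.ofReal (p 0)) volume →
        MemLp f2 (ENNReal.ofReal (p 1)) volume →
        Lnorm (p 0) f1 ≤ δ → Lnorm (p 1) f2 ≤ δ →
      ∀ A : Matrix (Fin (2 * d)) (Fin (2 * d)) ℝ, ∀ b : ℝ,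
        opNorm (Aᵀ * Jmat d * A) ≤ δ → |b| * opNorm (Aᵀ * Jmat d * A) ≤ δ →
        ‖T''op d A b
            ![fSharp η (gaussHR d p 0) f1, fSharp η (gaussHR d p 1) f2, gaussH d p 2]‖ ≤
          ε * (Lnorm (p 0) f1 ^ 2 + Lnorm (p 1) f2 ^ 2 +
            (1 + b ^ 2) * opNorm (Aᵀ * Jmat d * A) ^ 2) := by
  intro ε hε
  -- positivity of the Gaussian exponents
  have hp0 : 1 < p 0 := hp.1 0
  have hp1 : 1 < p 1 := hp.1 1
  have hγ0 : 0 < γexp p 0 / 4 := by linarith [gammaexp_pos hp 0]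
  have hγ1 : 0 < γexp p 1 / 4 := by linarith [gammaexp_pos hp 1]
  -- the Hölder constants
  set s0 : ℝ := Real.conjExponent (4 * p 0 / 3) with hs0def
  set s1 : ℝ := Real.conjExponent (4 * p 1 / 3) with hs1def
  set C1 : ℝ := (∫ z, W d (γexp p 0 / 4) z ^ s0) ^ (1 / s0) with hC1def
  set C2 : ℝ := (∫ z, W d (γexp p 1 / 4) z ^ s1) ^ (1 / s1) with hC2def
  have hC1 : 0 ≤ C1 :=
    Real.rpow_nonneg (integral_nonneg fun z => Real.rpow_nonneg (W_nonneg _ _ _) _) _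
  have hC2 : 0 ≤ C2 :=
    Real.rpow_nonneg (integral_nonneg fun z => Real.rpow_nonneg (W_nonneg _ _ _) _) _
  refine ⟨min 1 ((ε/(C1*C2+1))^2), lt_min one_pos (by positivity), ?_⟩
  intro f1 f2 hf1 hf2 hn1 hn2 A bb hAop hbAop
  set m : ℝ := opNorm (Aᵀ * Jmat d * A) with hmdef
  have hm0 : 0 ≤ m := opNorm_nonneg' _
  set t : ℝ := |bb| * m with htdef
  have ht0 : 0 ≤ t := mul_nonneg (abs_nonneg _) hm0
  set a1 : ℝ := Lnorm (p 0) f1 with ha1def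
  set a2 : ℝ := Lnorm (p 1) f2 with ha2def
  have ha1 : 0 ≤ a1 := Lnorm_nonneg _ _
  have ha2 : 0 ≤ a2 := Lnorm_nonneg _ _
  -- the majorant functions
  set φ1 : H d → ℝ := fun z => ‖f1 z‖ ^ (3/4 : ℝ) * W d (γexp p 0 / 4) z with hφ1def
  set φ2 : H d → ℝ := fun z => ‖f2 z‖ ^ (3/4 : ℝ) * W d (γexp p 1 / 4) z with hφ2def
  have hφ1nonneg : ∀ z, 0 ≤ φ1 z := fun z =>
    mul_nonneg (Real.rpow_nonneg (norm_nonneg _) _) (W_nonneg _ _ _)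
  have hφ2nonneg : ∀ z, 0 ≤ φ2 z := fun z =>
    mul_nonneg (Real.rpow_nonneg (norm_nonneg _) _) (W_nonneg _ _ _)
  have hφ1int : Integrable φ1 := integrable_phi hp0 hγ0 hf1
  have hφ2int : Integrable φ2 := integrable_phi hp1 hγ1 hf2
  set K1 : ℝ := ∫ z, φ1 z with hK1def
  set K2 : ℝ := ∫ z, φ2 z with hK2def
  have hK1nonneg : 0 ≤ K1 := integral_nonneg hφ1nonneg
  have hK2nonneg : 0 ≤ K2 := integral_nonneg hφ2nonneg
  have hK1le : K1 ≤ a1 ^ (3/4 : ℝ) * C1 := holder_key hp0 hγ0 hf1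
  have hK2le : K2 ≤ a2 ^ (3/4 : ℝ) * C2 := holder_key hp1 hγ1 hf2
  -- the integrand
  set F : H d → H d → ℂ := fun z1 z2 =>
    fSharp η (gaussHR d p 0) f1 z1 * fSharp η (gaussHR d p 1) f2 z2 *
      gaussH d p 2 (-(z1.1 + z2.1), -(z1.2 + z2.2 + symp d (mapp A z1.1) (mapp A z2.1))) *
      (Complex.exp (Complex.I * Complex.ofReal
        (bb * symp d (mapp A z1.1) (mapp A z2.1))) - 1) with hFdef
  have hT : T''op d A bb
      ![fSharp η (gaussHR d p 0) f1, fSharp η (gaussHR d p 1) f2, gaussH d p 2]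
      = ∫ z1 : H d, ∫ z2 : H d, F z1 z2 := rfl
  -- pointwise bound
  have hpoint : ∀ z1 z2 : H d, ‖F z1 z2‖ ≤ t * φ1 z1 * φ2 z2 := by
    intro z1 z2
    have h0 := norm_fSharp_le hp hη 0 f1 z1
    have h1 := norm_fSharp_le hp hη 1 f2 z2
    have h2 : ‖gaussH d p 2 (-(z1.1 + z2.1),
        -(z1.2 + z2.2 + symp d (mapp A z1.1) (mapp A z2.1)))‖ ≤ 1 := by
      rw [gaussH, Complex.norm_real,
        Real.norm_of_nonneg (gaussHR_pos d p 2 _).le]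
      exact gaussHR_le_one hp 2 _
    have h3 : ‖Complex.exp (Complex.I * Complex.ofReal
          (bb * symp d (mapp A z1.1) (mapp A z2.1))) - 1‖
        ≤ |bb| * (m * ‖z1.1‖ * ‖z2.1‖) := by
      refine (abs_exp_I_mul_sub_one _).trans ?_
      rw [abs_mul]
      exact mul_le_mul_of_nonneg_left (abs_symp_mapp_le d A z1.1 z2.1) (abs_nonneg bb)
    have hexpand : ‖F z1 z2‖
        = ‖fSharp η (gaussHR d p 0) f1 z1‖ * ‖fSharp η (gaussHR d p 1) f2 z2‖ *
          ‖gaussH d p 2 (-(z1.1 + z2.1),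
            -(z1.2 + z2.2 + symp d (mapp A z1.1) (mapp A z2.1)))‖ *
          ‖Complex.exp (Complex.I * Complex.ofReal
            (bb * symp d (mapp A z1.1) (mapp A z2.1))) - 1‖ := by
      rw [hFdef]
      simp [norm_mul]
    rw [hexpand]
    calc ‖fSharp η (gaussHR d p 0) f1 z1‖ * ‖fSharp η (gaussHR d p 1) f2 z2‖ *
          ‖gaussH d p 2 (-(z1.1 + z2.1),
            -(z1.2 + z2.2 + symp d (mapp A z1.1) (mapp A z2.1)))‖ *
          ‖Complex.exp (Complex.I * Complex.ofReal
            (bb * symp d (mapp A z1.1) (mapp A z2.1))) - 1‖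
        ≤ (‖f1 z1‖ ^ (3/4 : ℝ)
            * (Real.exp (-(γexp p 0 / 4 * ‖z1.1‖ ^ 2)) * Real.exp (-(γexp p 0 / 4 * z1.2 ^ 2))))
          * (‖f2 z2‖ ^ (3/4 : ℝ)
            * (Real.exp (-(γexp p 1 / 4 * ‖z2.1‖ ^ 2)) * Real.exp (-(γexp p 1 / 4 * z2.2 ^ 2))))
          * 1 * (|bb| * (m * ‖z1.1‖ * ‖z2.1‖)) := by
          apply mul_le_mul _ h3 (norm_nonneg _) (by positivity)
          apply mul_le_mul _ h2 (norm_nonneg _) (by positivity)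
          exact mul_le_mul h0 h1 (norm_nonneg _) (by positivity)
    _ = t * φ1 z1 * φ2 z2 := by
          rw [htdef, hφ1def, hφ2def]
          unfold W
          ring
  -- the inner integral bound
  have hinner : ∀ z1 : H d, ‖∫ z2 : H d, F z1 z2‖ ≤ (t * K2) * φ1 z1 := by
    intro z1
    calc ‖∫ z2 : H d, F z1 z2‖ ≤ ∫ z2 : H d, ‖F z1 z2‖ :=
          norm_integral_le_integral_norm _
    _ ≤ ∫ z2 : H d, (t * φ1 z1) * φ2 z2 := by
          apply integral_mono_of_nonneg (Eventually.of_forall fun z2 => norm_nonneg _)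
            (hφ2int.const_mul _)
          exact Eventually.of_forall fun z2 => (hpoint z1 z2).trans (le_of_eq (by ring))
    _ = (t * φ1 z1) * K2 := by rw [integral_const_mul]
    _ = (t * K2) * φ1 z1 := by ring
  -- assembling
  rw [hT]
  calc ‖∫ z1 : H d, ∫ z2 : H d, F z1 z2‖
      ≤ ∫ z1 : H d, ‖∫ z2 : H d, F z1 z2‖ := norm_integral_le_integral_norm _
  _ ≤ ∫ z1 : H d, (t * K2) * φ1 z1 := by
      apply integral_mono_of_nonneg (Eventually.of_forall fun z1 => norm_nonneg _)
        (hφ1int.const_mul _)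
      exact Eventually.of_forall hinner
  _ = (t * K2) * K1 := by rw [integral_const_mul]
  _ ≤ t * ((a2 ^ (3/4 : ℝ) * C2) * (a1 ^ (3/4 : ℝ) * C1)) := by
      rw [mul_assoc]
      exact mul_le_mul_of_nonneg_left
        (mul_le_mul hK2le hK1le hK1nonneg (by positivity)) ht0
  _ = t * (a2 ^ (3/4 : ℝ) * C2) * (a1 ^ (3/4 : ℝ) * C1) := by ring
  _ ≤ ε * (a1 ^ 2 + a2 ^ 2 + (1 + bb ^ 2) * m ^ 2) :=
      final_arith C1 C2 ε a1 a2 bb m hC1 hC2 hε ha1 ha2 hm0 hn1 hn2 hbAop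


end Stability
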